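/- arXiv:2504.05274 — 4 statements merged into one kernel-verified Lean document; each statement's English description precedes it below -/
import Mathlib

section
/- Let e ≥ 1 and N be natural numbers, let M : ℕ → Matrix (Fin e) (Fin e) ℝ, and let Y : ℝ → Matrix (Fin e) (Fin e) ℝ be continuous on [0, N] with Y(0) = 1 (the identity matrix), such that for every natural number k < N and every t in the open interval (k, k+1), Y is differentiable at t with derivative M(k) · Y(t). Then Y(N) = exp(M(N−1)) · exp(M(N−2)) ⋯ exp(M(0)), where exp denotes the matrix exponential. -/
open scoped Matrix

attribute [local instance] Matrix.frobeniusNormedAddCommGroup Matrix.frobeniusNormedSpace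

attribute [local instance] Matrix.frobeniusNormedRing Matrix.frobeniusNormedAlgebra

open NormedSpace in
/-- Solving the constant-coefficient linear ODE on one unit interval. -/
lemma step_lemma {e : ℕ} (A : Matrix (Fin e) (Fin e) ℝ)
    (Y : ℝ → Matrix (Fin e) (Fin e) ℝ) (a : ℝ)
    (hcont : ContinuousOn Y (Set.Icc a (a + 1)))
    (hODE : ∀ t ∈ Set.Ioo a (a + 1), HasDerivAt Y (A * Y t) t) :
    Y (a + 1) = NormedSpace.exp A * Y a := by
  set F : ℝ → Matrix (Fin e) (Fin e) ℝ := fun t => exp ((a - t) • A) * Y t with hF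
  have hFcont : ContinuousOn F (Set.Icc a (a + 1)) := by
    apply ContinuousOn.mul _ hcont
    exact ((NormedSpace.exp_continuous.comp (by continuity : Continuous fun t : ℝ => (a - t) • A))).continuousOn
  have hFderiv : ∀ t ∈ Set.Ioo a (a + 1), HasDerivAt F 0 t := by
    intro t ht
    have h1 : HasDerivAt (fun t : ℝ => exp ((a - t) • A))
        ((-1 : ℝ) • (exp ((a - t) • A) * A)) t := by
      have hu : HasDerivAt (fun x : ℝ => a - x) (-1 : ℝ) t := by
        simpa using (hasDerivAt_id t).const_sub a
      have := (hasDerivAt_exp_smul_const (𝕂 := ℝ) A (a - t)).scomp t hu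
      exact this
    have h2 := (h1.mul (hODE t ht))
    have h0 : (-1 : ℝ) • (exp ((a - t) • A) * A) * Y t
        + exp ((a - t) • A) * (A * Y t) = 0 := by
      simp [mul_assoc]
    rw [h0] at h2
    exact h2
  -- F is constant on (a, a+1], equal to F at any interior point; take limits
  have hconst : ∀ c ∈ Set.Ioo a (a + 1), F (a + 1) = F c := by
    intro c hc
    have h := constant_of_has_deriv_right_zero (f := F) (a := c) (b := a + 1)
      (hFcont.mono (Set.Icc_subset_Icc hc.1.le le_rfl))
      (fun x hx => by
        have hx' : x ∈ Set.Ioo a (a + 1) := ⟨lt_of_lt_of_le hc.1 hx.1, hx.2⟩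
        exact (hFderiv x hx').hasDerivWithinAt)
    exact h (a + 1) (Set.right_mem_Icc.2 (by linarith [hc.2]))
  have hlim : F (a + 1) = F a := by
    have hne : (nhdsWithin a (Set.Ioo a (a + 1))).NeBot := by
      apply IsGLB.nhdsWithin_neBot
      · exact isGLB_Ioo (by linarith)
      · exact Set.nonempty_Ioo.2 (by linarith)
    have h1 : Filter.Tendsto F (nhdsWithin a (Set.Ioo a (a + 1))) (nhds (F a)) := by
      have := (hFcont a (Set.left_mem_Icc.2 (by linarith)))
      exact this.mono_left (nhdsWithin_mono a (by
        intro x hx; exact ⟨hx.1.le, hx.2.le⟩))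
    have h2 : Filter.Tendsto F (nhdsWithin a (Set.Ioo a (a + 1))) (nhds (F (a + 1))) := by
      apply Filter.Tendsto.congr' _ tendsto_const_nhds
      filter_upwards [self_mem_nhdsWithin] with x hx
      exact hconst x hx
    exact tendsto_nhds_unique h2 h1
  have hFa : F a = Y a := by simp [hF]
  have hFa1 : F (a + 1) = exp (-A) * Y (a + 1) := by
    simp [hF]
  have key : exp (-A) * Y (a + 1) = Y a := by rw [← hFa1, hlim, hFa]
  have hinv : exp A * exp (-A) = 1 := by
    have h := NormedSpace.exp_add_of_commute (Commute.neg_right (Commute.refl A))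
    simp at h; exact h.symm
  calc Y (a + 1) = (exp A * exp (-A)) * Y (a + 1) := by rw [hinv, one_mul]
    _ = exp A * (exp (-A) * Y (a + 1)) := by rw [mul_assoc]
    _ = exp A * Y a := by rw [key]

/-- The solution of the matrix-valued linear ODE `Ẏ(t) = M(⌊t⌋) · Y(t)` with
piecewise-constant coefficients and `Y(0) = 1` is, at integer times, the ordered product
of the matrix exponentials of the coefficient matrices:
`Y(N) = exp(M(N-1)) · exp(M(N-2)) ⋯ exp(M(0))`. -/
theorem piecewise_linear_ode_solution (e : ℕ) (he : 1 ≤ e) (N : ℕ)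
    (M : ℕ → Matrix (Fin e) (Fin e) ℝ)
    (Y : ℝ → Matrix (Fin e) (Fin e) ℝ)
    (hcont : ContinuousOn Y (Set.Icc (0 : ℝ) N))
    (hY0 : Y 0 = 1)
    (hODE : ∀ k : ℕ, k < N → ∀ t ∈ Set.Ioo (k : ℝ) ((k : ℝ) + 1),
      HasDerivAt Y (M k * Y t) t) :
    Y N = (((List.range N).reverse.map (fun k => NormedSpace.exp (M k)))).prod := by
  suffices h : ∀ n ≤ N, Y n = (((List.range n).reverse.map (fun k => NormedSpace.exp (M k)))).prod
    from h N le_rfl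
  intro n hn
  induction n with
  | zero => simpa using hY0
  | succ m ih =>
    have hm : m ≤ N := le_of_lt hn
    have hstep : Y ((m : ℝ) + 1) = NormedSpace.exp (M m) * Y m := by
      apply step_lemma (M m) Y m
      · apply hcont.mono
        intro x hx
        constructor
        · exact le_trans (Nat.cast_nonneg m) hx.1
        · calc x ≤ (m : ℝ) + 1 := hx.2
            _ ≤ (N : ℝ) := by exact_mod_cast Nat.succ_le_of_lt hn
      · exact hODE m hn
    have hcast : ((m + 1 : ℕ) : ℝ) = (m : ℝ) + 1 := by push_cast; ring
    rw [hcast, hstep, ih hm]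
    simp [List.range_succ]
end

section
/- Let (τ : H → G, α) be a crossed module of groups. Suppose X, Y, X', Y' ∈ H and x_s, x_e, x_n, x_w ∈ G satisfy the boundary condition τ(X)·x_w·x_n = x_s·x_e. Then the interchange law holds: α_{x_s}(Y) · X · α_{x_w}(α_{x_n}(Y') · X') = α_{x_s}(Y · α_{x_e}(Y')) · X · α_{x_w}(X'). (Here x_n is the south edge of the cell containing X' and x_e is the west edge of the cell containing Y', reflecting the matching conditions x'_s = x_n and y_w = x_e.) -/
/-- Interchange law for the double category associated to a crossed module
`(τ : H → G, α)`: if `τ X * x_w * x_n = x_s * x_e`, then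
`α x_s Y * X * α x_w (α x_n Y' * X') = α x_s (Y * α x_e Y') * X * α x_w X'`. -/
theorem crossed_module_interchange {G H : Type*} [Group G] [Group H]
    (τ : H →* G) (α : G →* MulAut H)
    (equi : ∀ (g : G) (h : H), τ (α g h) = g * τ h * g⁻¹)
    (peif : ∀ h h' : H, α (τ h) h' = h * h' * h⁻¹)
    (X Y X' Y' : H) (xs xe xn xw : G)
    (hX : τ X * xw * xn = xs * xe) :
    α xs Y * X * α xw (α xn Y' * X') = α xs (Y * α xe Y') * X * α xw X' := by
  have key : X * α xw (α xn Y') = α xs (α xe Y') * X := by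
    have h1 : α xs (α xe Y') = α (xs * xe) Y' := by simp [map_mul]
    rw [h1, ← hX]
    have h2 : α (τ X * xw * xn) Y' = α (τ X) (α xw (α xn Y')) := by simp [map_mul]
    rw [h2, peif]
    group
  calc α xs Y * X * α xw (α xn Y' * X')
      = α xs Y * (X * α xw (α xn Y')) * α xw X' := by rw [map_mul]; group
    _ = α xs Y * (α xs (α xe Y') * X) * α xw X' := by rw [key]
    _ = α xs (Y * α xe Y') * X * α xw X' := by rw [map_mul]; group
end

section
/- Let K be a field and n, p, q natural numbers. For a quadruple h = (P, B, R, N) with P ∈ GL_n(K), B ∈ K^{n×q}, R ∈ K^{p×n}, N ∈ K^{p×q}, define τ(h) to be the pair of block matrices ([[P, 0],[R, 1_p]], [[P, B],[0, 1_q]]). Then for all such quadruples h = (P, B, R, N) and h' = (P', B', R', N'), with the product h •_h h' = (P'·P, P'·B + B', R'·P + R, R'·B + N + N'), one has τ(h •_h h') = τ(h') · τ(h), where the product on the right is entrywise matrix multiplication of the pairs. -/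
/-- The carrier of the group `H = GL^{n,p,q}₋₁`: quadruples `(P, B, R, N)` with
`P ∈ GL_n(K)`, `B ∈ K^{n×q}`, `R ∈ K^{p×n}`, `N ∈ K^{p×q}`. -/
def GLmoH (K : Type*) [Field K] (n p q : ℕ) : Type _ :=
  Matrix.GeneralLinearGroup (Fin n) K × Matrix (Fin n) (Fin q) K ×
    Matrix (Fin p) (Fin n) K × Matrix (Fin p) (Fin q) K

/-- The operation `(P,B,R,N) •_h (P',B',R',N') = (P'P, P'B + B', R'P + R, R'B + N + N')`. -/
def GLmoHMul {K : Type*} [Field K] {n p q : ℕ} (x y : GLmoH K n p q) : GLmoH K n p q :=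
  (y.1 * x.1,
   (y.1 : Matrix (Fin n) (Fin n) K) * x.2.1 + y.2.1,
   y.2.2.1 * (x.1 : Matrix (Fin n) (Fin n) K) + x.2.2.1,
   y.2.2.1 * x.2.1 + x.2.2.2 + y.2.2.2)

/-- The feedback map `τ (P,B,R,N) = ([[P, 0],[R, 1]], [[P, B],[0, 1]])` of the general
linear crossed module. -/
def GLmoFeedback {K : Type*} [Field K] {n p q : ℕ} (x : GLmoH K n p q) :
    Matrix (Fin n ⊕ Fin p) (Fin n ⊕ Fin p) K × Matrix (Fin n ⊕ Fin q) (Fin n ⊕ Fin q) K :=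
  (Matrix.fromBlocks (x.1 : Matrix (Fin n) (Fin n) K) 0 x.2.2.1 1,
   Matrix.fromBlocks (x.1 : Matrix (Fin n) (Fin n) K) x.2.1 0 1)

/-- The feedback map of the general linear crossed module is compatible with the group
structures: `τ (h •_h h') = τ h' * τ h` (entrywise matrix multiplication of pairs). -/
theorem GLmo_feedback_antihom (K : Type*) [Field K] (n p q : ℕ)
    (h h' : GLmoH K n p q) :
    GLmoFeedback (GLmoHMul h h') =
      ((GLmoFeedback h').1 * (GLmoFeedback h).1, (GLmoFeedback h').2 * (GLmoFeedback h).2) := by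
  simp [GLmoFeedback, GLmoHMul, Matrix.fromBlocks_multiply, Matrix.GeneralLinearGroup.coe_mul]
end

section
/- Let (τ : H → G, α) be a crossed module of groups, let h, v : ℤ × ℤ → G and X : ℤ × ℤ → H satisfy τ(X(i,j)) · v(i,j) · h(i, j+1) = h(i,j) · v(i+1, j) for all i, j ∈ ℤ. For a ≤ b and j define Fh(a,b,j) := h(a,j) · h(a+1,j) ⋯ h(b−1,j), and for i and c ≤ d define Fv(i,c,d) := v(i,c) · v(i,c+1) ⋯ v(i,d−1). Then there exists a unique function F₂ assigning to each rectangle (a, b, c, d) with a ≤ b, c ≤ d an element F₂(a,b,c,d) ∈ H such that: (i) F₂(i,i+1,j,j+1) = X(i,j) for all i, j; (ii) F₂(a,b,c,d) = 1 whenever a = b or c = d; (iii) τ(F₂(a,b,c,d)) · Fv(a,c,d) · Fh(a,b,d) = Fh(a,b,c) · Fv(b,c,d) (boundary condition); (iv) F₂(a,b,c,d) = α_{Fh(a,b',c)}(F₂(b',b,c,d)) · F₂(a,b',c,d) whenever a ≤ b' ≤ b (horizontal composition); and (v) F₂(a,b,c,d) = F₂(a,b,c,d') · α_{Fv(a,c,d')}(F₂(a,b,d',d))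 whenever c ≤ d' ≤ d (vertical composition). -/
/-- Ordered product `h(a,j) * h(a+1,j) * ⋯ * h(b-1,j)` of horizontal edge values. -/
def Fh {G : Type*} [Monoid G] (h : ℤ × ℤ → G) (a b j : ℤ) : G :=
  (((List.range (b - a).toNat).map (fun k => h (a + k, j)))).prod

/-- Ordered product `v(i,c) * v(i,c+1) * ⋯ * v(i,d-1)` of vertical edge values. -/
def Fv {G : Type*} [Monoid G] (v : ℤ × ℤ → G) (i c d : ℤ) : G :=
  (((List.range (d - c).toNat).map (fun k => v (i, c + k)))).prod

section FhFv
variable {G : Type*} [Monoid G]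

lemma Fh_self (h : ℤ × ℤ → G) (a j : ℤ) : Fh h a a j = 1 := by
  simp [Fh]

lemma Fh_succ (h : ℤ × ℤ → G) (a b j : ℤ) (hab : a ≤ b) :
    Fh h a (b + 1) j = Fh h a b j * h (b, j) := by
  unfold Fh
  have h1 : (b + 1 - a).toNat = (b - a).toNat + 1 := by omega
  rw [h1]
  have h2 : a + (b - a) ⊔ 0 = b := by rw [max_eq_left (by omega : (0:ℤ) ≤ b - a)]; ring
  simp [List.range_succ, h2]

lemma Fh_add (h : ℤ × ℤ → G) (a b j : ℤ) (hab : a ≤ b) (k : ℕ) :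
    Fh h a (b + k) j = Fh h a b j * Fh h b (b + k) j := by
  induction k with
  | zero => simp [Fh_self]
  | succ k ih =>
      have : (b : ℤ) + (k + 1 : ℕ) = (b + k) + 1 := by push_cast; ring
      rw [this, Fh_succ h a (b + k) j (by omega), Fh_succ h b (b + k) j (by omega), ih, mul_assoc]

lemma Fh_split (h : ℤ × ℤ → G) (a b c j : ℤ) (hab : a ≤ b) (hbc : b ≤ c) :
    Fh h a c j = Fh h a b j * Fh h b c j := by
  have hc : c = b + ((c - b).toNat : ℤ) := by omega
  rw [hc] at *
  exact Fh_add h a b j hab _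

lemma Fv_self (v : ℤ × ℤ → G) (i c : ℤ) : Fv v i c c = 1 := by
  simp [Fv]

lemma Fv_succ (v : ℤ × ℤ → G) (i c d : ℤ) (hcd : c ≤ d) :
    Fv v i c (d + 1) = Fv v i c d * v (i, d) := by
  unfold Fv
  have h1 : (d + 1 - c).toNat = (d - c).toNat + 1 := by omega
  rw [h1]
  have h2 : c + (d - c) ⊔ 0 = d := by rw [max_eq_left (by omega : (0:ℤ) ≤ d - c)]; ring
  simp [List.range_succ, h2]

lemma Fv_add (v : ℤ × ℤ → G) (i c d : ℤ) (hcd : c ≤ d) (k : ℕ) :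
    Fv v i c (d + k) = Fv v i c d * Fv v i d (d + k) := by
  induction k with
  | zero => simp [Fv_self]
  | succ k ih =>
      have : (d : ℤ) + (k + 1 : ℕ) = (d + k) + 1 := by push_cast; ring
      rw [this, Fv_succ v i c (d + k) (by omega), Fv_succ v i d (d + k) (by omega), ih, mul_assoc]

lemma Fv_split (v : ℤ × ℤ → G) (i c d e : ℤ) (hcd : c ≤ d) (hde : d ≤ e) :
    Fv v i c e = Fv v i c d * Fv v i d e := by
  have he : e = d + ((e - d).toNat : ℤ) := by omega
  rw [he] at *
  exact Fv_add v i c d hcd _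

lemma Fh_one (h : ℤ × ℤ → G) (a j : ℤ) : Fh h a (a + 1) j = h (a, j) := by
  rw [Fh_succ h a a j le_rfl, Fh_self, one_mul]

lemma Fv_one (v : ℤ × ℤ → G) (i c : ℤ) : Fv v i c (c + 1) = v (i, c) := by
  rw [Fv_succ v i c c le_rfl, Fv_self, one_mul]

end FhFv

/-- The defining conditions for an aggregation `F₂` of crossed-module--valued planar data
over rectangles: (i) values on elementary squares, (ii) triviality on degenerate
rectangles, (iii) the boundary condition, (iv) horizontal and (v) vertical composition. -/
def IsCMRectAggregation {G H : Type*} [Group G] [Group H]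
    (τ : H →* G) (α : G →* MulAut H)
    (h v : ℤ × ℤ → G) (X : ℤ × ℤ → H)
    (F : ∀ a b c d : ℤ, a ≤ b → c ≤ d → H) : Prop :=
  (∀ i j : ℤ, F i (i + 1) j (j + 1) (by omega) (by omega) = X (i, j)) ∧
  (∀ (a b c d : ℤ) (hab : a ≤ b) (hcd : c ≤ d), a = b ∨ c = d → F a b c d hab hcd = 1) ∧
  (∀ (a b c d : ℤ) (hab : a ≤ b) (hcd : c ≤ d),
    τ (F a b c d hab hcd) * Fv v a c d * Fh h a b d = Fh h a b c * Fv v b c d) ∧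
  (∀ (a b' b c d : ℤ) (h1 : a ≤ b') (h2 : b' ≤ b) (hcd : c ≤ d),
    F a b c d (h1.trans h2) hcd =
      α (Fh h a b' c) (F b' b c d h2 hcd) * F a b' c d h1 hcd) ∧
  (∀ (a b c d' d : ℤ) (hab : a ≤ b) (h1 : c ≤ d') (h2 : d' ≤ d),
    F a b c d hab (h1.trans h2) =
      F a b c d' hab h1 * α (Fv v a c d') (F a b d' d hab h2))

section CM
variable {G H : Type*} [Group G] [Group H]

/-- Row aggregation: value on `[a, a+n] × [j, j+1]`. -/
def CMRow (α : G →* MulAut H) (h : ℤ × ℤ → G) (X : ℤ × ℤ → H) :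
    ℕ → ℤ → ℤ → H
  | 0, _, _ => 1
  | n + 1, a, j => α (Fh h a (a + n) j) (X (a + n, j)) * CMRow α h X n a j

/-- Full aggregation: value on `[a, a+n] × [c, c+m]`. -/
def CMF2 (α : G →* MulAut H) (h v : ℤ × ℤ → G) (X : ℤ × ℤ → H) :
    ℕ → ℕ → ℤ → ℤ → H
  | _, 0, _, _ => 1
  | n, m + 1, a, c =>
      CMF2 α h v X n m a c * α (Fv v a c (c + m)) (CMRow α h X n a (c + m))

variable (τ : H →* G) (α : G →* MulAut H)
    (equi : ∀ (g : G) (x : H), τ (α g x) = g * τ x * g⁻¹)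
    (peif : ∀ x x' : H, α (τ x) x' = x * x' * x⁻¹)
    (h v : ℤ × ℤ → G) (X : ℤ × ℤ → H)
    (hcompat : ∀ i j : ℤ,
      τ (X (i, j)) * v (i, j) * h (i, j + 1) = h (i, j) * v (i + 1, j))

include equi hcompat in
lemma CMRow_boundary (n : ℕ) (a j : ℤ) :
    τ (CMRow α h X n a j) * v (a, j) * Fh h a (a + n) (j + 1)
      = Fh h a (a + n) j * v (a + n, j) := by
  induction n with
  | zero => simp [CMRow, Fh_self]
  | succ n ih =>
      have hcast : (a : ℤ) + (n + 1 : ℕ) = (a + n) + 1 := by push_cast; ring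
      rw [CMRow, map_mul, equi, hcast,
        Fh_succ h a (a + n) (j + 1) (by omega), Fh_succ h a (a + n) j (by omega)]
      calc Fh h a (a + ↑n) j * τ (X (a + ↑n, j)) * (Fh h a (a + ↑n) j)⁻¹ *
            τ (CMRow α h X n a j) * v (a, j) * (Fh h a (a + ↑n) (j + 1) * h (a + ↑n, j + 1))
          = Fh h a (a + ↑n) j * τ (X (a + ↑n, j)) * (Fh h a (a + ↑n) j)⁻¹ *
            (τ (CMRow α h X n a j) * v (a, j) * Fh h a (a + ↑n) (j + 1)) * h (a + ↑n, j + 1) := by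
            group
        _ = Fh h a (a + ↑n) j * τ (X (a + ↑n, j)) * (Fh h a (a + ↑n) j)⁻¹ *
            (Fh h a (a + ↑n) j * v (a + ↑n, j)) * h (a + ↑n, j + 1) := by rw [ih]
        _ = Fh h a (a + ↑n) j * (τ (X (a + ↑n, j)) * v (a + ↑n, j) * h (a + ↑n, j + 1)) := by
            group
        _ = Fh h a (a + ↑n) j * (h (a + ↑n, j) * v (a + ↑n + 1, j)) := by rw [hcompat]
        _ = Fh h a (a + ↑n) j * h (a + ↑n, j) * v (a + ↑n + 1, j) := by group

include equi hcompat in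
lemma CMF2_boundary (n m : ℕ) (a c : ℤ) :
    τ (CMF2 α h v X n m a c) * Fv v a c (c + m) * Fh h a (a + n) (c + m)
      = Fh h a (a + n) c * Fv v (a + n) c (c + m) := by
  induction m with
  | zero => simp [CMF2, Fv_self]
  | succ m ih =>
      have hcast : (c : ℤ) + (m + 1 : ℕ) = (c + m) + 1 := by push_cast; ring
      rw [CMF2, map_mul, equi, hcast,
        Fv_succ v a c (c + m) (by omega), Fv_succ v (a + n) c (c + m) (by omega)]
      calc τ (CMF2 α h v X n m a c) *
            (Fv v a c (c + ↑m) * τ (CMRow α h X n a (c + ↑m)) * (Fv v a c (c + ↑m))⁻¹) *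
            (Fv v a c (c + ↑m) * v (a, c + ↑m)) * Fh h a (a + ↑n) (c + ↑m + 1)
          = τ (CMF2 α h v X n m a c) * Fv v a c (c + ↑m) *
            (τ (CMRow α h X n a (c + ↑m)) * v (a, c + ↑m) * Fh h a (a + ↑n) (c + ↑m + 1)) := by
            group
        _ = τ (CMF2 α h v X n m a c) * Fv v a c (c + ↑m) *
            (Fh h a (a + ↑n) (c + ↑m) * v (a + ↑n, c + ↑m)) := by
            rw [CMRow_boundary τ α equi h v X hcompat]
        _ = (τ (CMF2 α h v X n m a c) * Fv v a c (c + ↑m) * Fh h a (a + ↑n) (c + ↑m)) *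
            v (a + ↑n, c + ↑m) := by group
        _ = Fh h a (a + ↑n) c * Fv v (a + ↑n) c (c + ↑m) * v (a + ↑n, c + ↑m) := by rw [ih]
        _ = _ := by group

lemma CMRow_hcomp (n k : ℕ) (a j : ℤ) :
    CMRow α h X (n + k) a j
      = α (Fh h a (a + n) j) (CMRow α h X k (a + n) j) * CMRow α h X n a j := by
  induction k with
  | zero => simp [CMRow]
  | succ k ih =>
      have e1 : n + (k + 1) = (n + k) + 1 := rfl
      have e2 : (a : ℤ) + (↑(n + k) : ℕ) = (a + n) + k := by push_cast; ring
      rw [e1, CMRow, ih, CMRow,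
        Fh_split h a (a + n) (a + ↑(n + k)) j (by omega) (by push_cast; omega)]
      simp only [map_mul, MulAut.mul_apply, e2]
      group

include equi peif hcompat in
lemma CMF2_hcomp (n k m : ℕ) (a c : ℤ) :
    CMF2 α h v X (n + k) m a c
      = α (Fh h a (a + n) c) (CMF2 α h v X k m (a + n) c) * CMF2 α h v X n m a c := by
  induction m with
  | zero => simp [CMF2]
  | succ m ih =>
      simp only [CMF2]
      rw [ih, CMRow_hcomp α h X n k a (c + ↑m)]
      simp only [map_mul, MulAut.mul_apply]
      -- notation
      set P := Fh h a (a + n) c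
      set P' := Fh h a (a + n) (c + m)
      set Q := Fv v a c (c + m)
      set Q' := Fv v (a + n) c (c + m)
      set A := CMF2 α h v X k m (a + n) c
      set B := CMF2 α h v X n m a c
      set R := CMRow α h X k (a + n) (c + m)
      set S := CMRow α h X n a (c + m)
      -- goal: α P A * B * (α Q (α P' R) * α Q S) = α P (A * α Q' R) * B
      have key : B * α Q (α P' R) * B⁻¹ = α P (α Q' R) := by
        have : α (τ B) (α Q (α P' R)) = B * α Q (α P' R) * B⁻¹ := peif _ _
        rw [← this]
        have hb : τ B * Q * P' = P * Q' := CMF2_boundary τ α equi h v X hcompat n m a c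
        calc α (τ B) (α Q (α P' R)) = α (τ B * Q * P') R := by
              simp [map_mul, MulAut.mul_apply]
          _ = α (P * Q') R := by rw [hb]
          _ = α P (α Q' R) := by simp [map_mul, MulAut.mul_apply]
      calc α P A * B * (α Q (α P' R) * α Q S)
          = α P A * (B * α Q (α P' R) * B⁻¹) * (B * α Q S) := by group
        _ = α P A * α P (α Q' R) * (B * α Q S) := by rw [key]
        _ = _ := by group

lemma CMF2_vcomp (n m k : ℕ) (a c : ℤ) :
    CMF2 α h v X n (m + k) a c
      = CMF2 α h v X n m a c * α (Fv v a c (c + m)) (CMF2 α h v X n k a (c + m)) := by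
  induction k with
  | zero => simp [CMF2]
  | succ k ih =>
      have e1 : m + (k + 1) = (m + k) + 1 := rfl
      have e2 : (c : ℤ) + (↑(m + k) : ℕ) = (c + m) + k := by push_cast; ring
      rw [e1, CMF2, ih, CMF2,
        Fv_split v a c (c + m) (c + ↑(m + k)) (by omega) (by push_cast; omega)]
      simp only [map_mul, MulAut.mul_apply, e2]
      group

lemma CMF2_zero_left (m : ℕ) (a c : ℤ) : CMF2 α h v X 0 m a c = 1 := by
  induction m with
  | zero => rfl
  | succ m ih => rw [CMF2, ih, CMRow]; simp

end CM

lemma CMRect_unique {G H : Type*} [Group G] [Group H]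
    (τ : H →* G) (α : G →* MulAut H) (h v : ℤ × ℤ → G) (X : ℤ × ℤ → H)
    (F F' : ∀ a b c d : ℤ, a ≤ b → c ≤ d → H)
    (hF : IsCMRectAggregation τ α h v X F) (hF' : IsCMRectAggregation τ α h v X F') :
    F = F' := by
  obtain ⟨F1, F2, _, F4, F5⟩ := hF
  obtain ⟨F1', F2', _, F4', F5'⟩ := hF'
  have sq : ∀ (a b j d : ℤ) (hb : b = a + 1) (hd : d = j + 1) (h1 : a ≤ b) (h2 : j ≤ d),
      F a b j d h1 h2 = X (a, j) := by
    rintro a b j d rfl rfl h1 h2; exact F1 a j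
  have sq' : ∀ (a b j d : ℤ) (hb : b = a + 1) (hd : d = j + 1) (h1 : a ≤ b) (h2 : j ≤ d),
      F' a b j d h1 h2 = X (a, j) := by
    rintro a b j d rfl rfl h1 h2; exact F1' a j
  have row : ∀ (n : ℕ) (a b j d : ℤ) (hb : b = a + n) (hd : d = j + 1)
      (h1 : a ≤ b) (h2 : j ≤ d), F a b j d h1 h2 = F' a b j d h1 h2 := by
    intro n
    induction n with
    | zero =>
        intro a b j d hb hd h1 h2
        rw [F2 a b j d h1 h2 (Or.inl (by omega)), F2' a b j d h1 h2 (Or.inl (by omega))]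
    | succ n ih =>
        intro a b j d hb hd h1 h2
        rw [F4 a (a + n) b j d (by omega) (by omega) h2,
          F4' a (a + n) b j d (by omega) (by omega) h2,
          sq (a + n) b j d (by omega) hd (by omega) h2,
          sq' (a + n) b j d (by omega) hd (by omega) h2,
          ih a (a + n) j d rfl hd (by omega) h2]
  have col : ∀ (m : ℕ) (a b c d : ℤ) (hd : d = c + m) (h1 : a ≤ b) (h2 : c ≤ d),
      F a b c d h1 h2 = F' a b c d h1 h2 := by
    intro m
    induction m with
    | zero =>
        intro a b c d hd h1 h2
        rw [F2 a b c d h1 h2 (Or.inr (by omega)), F2' a b c d h1 h2 (Or.inr (by omega))]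
    | succ m ih =>
        intro a b c d hd h1 h2
        rw [F5 a b c (c + m) d h1 (by omega) (by omega),
          F5' a b c (c + m) d h1 (by omega) (by omega),
          ih a b c (c + m) rfl h1 (by omega),
          row (b - a).toNat a b (c + m) d (by omega) (by omega) h1 (by omega)]
  funext a b c d h1 h2
  exact col (d - c).toNat a b c d (by omega) h1 h2

/-- Planar data valued in a crossed module of groups, compatible on elementary squares,
aggregates uniquely over all rectangles `[a,b] × [c,d]` with corners in `ℤ²`. -/
theorem unique_crossed_module_rectangle_aggregation {G H : Type*} [Group G] [Group H]
    (τ : H →* G) (α : G →* MulAut H)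
    (equi : ∀ (g : G) (x : H), τ (α g x) = g * τ x * g⁻¹)
    (peif : ∀ x x' : H, α (τ x) x' = x * x' * x⁻¹)
    (h v : ℤ × ℤ → G) (X : ℤ × ℤ → H)
    (hcompat : ∀ i j : ℤ,
      τ (X (i, j)) * v (i, j) * h (i, j + 1) = h (i, j) * v (i + 1, j)) :
    ∃! F : ∀ a b c d : ℤ, a ≤ b → c ≤ d → H, IsCMRectAggregation τ α h v X F := by
  have hprop : IsCMRectAggregation τ α h v X
      (fun a b c d _ _ => CMF2 α h v X (b - a).toNat (d - c).toNat a c) := by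
    refine ⟨?_, ?_, ?_, ?_, ?_⟩
    · intro i j
      have e1 : (i + 1 - i).toNat = 1 := by omega
      have e2 : (j + 1 - j).toNat = 1 := by omega
      simp only [e1, e2]
      show CMF2 α h v X (0 + 1) (0 + 1) i j = X (i, j)
      rw [CMF2, CMF2, CMRow, CMRow]
      simp [Fv_self, Fh_self]
    · intro a b c d hab hcd hdeg
      rcases hdeg with rfl | rfl
      · have e : (a - a).toNat = 0 := by omega
        simp only [e]
        exact CMF2_zero_left α h v X _ a c
      · have e : (c - c).toNat = 0 := by omega
        simp only [e]
        rw [CMF2]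
    · intro a b c d hab hcd
      obtain ⟨n, rfl⟩ : ∃ n : ℕ, b = a + n := ⟨(b - a).toNat, by omega⟩
      obtain ⟨m, rfl⟩ : ∃ m : ℕ, d = c + m := ⟨(d - c).toNat, by omega⟩
      have e1 : (a + (n : ℤ) - a).toNat = n := by omega
      have e2 : (c + (m : ℤ) - c).toNat = m := by omega
      simp only [e1, e2]
      exact CMF2_boundary τ α equi h v X hcompat n m a c
    · intro a b' b c d h1 h2 hcd
      obtain ⟨n, rfl⟩ : ∃ n : ℕ, b' = a + n := ⟨(b' - a).toNat, by omega⟩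
      obtain ⟨k, rfl⟩ : ∃ k : ℕ, b = a + n + k := ⟨(b - (a + n)).toNat, by omega⟩
      obtain ⟨m, rfl⟩ : ∃ m : ℕ, d = c + m := ⟨(d - c).toNat, by omega⟩
      have e1 : (a + (n : ℤ) + (k : ℤ) - a).toNat = n + k := by omega
      have e2 : (c + (m : ℤ) - c).toNat = m := by omega
      have e3 : (a + (n : ℤ) + (k : ℤ) - (a + n)).toNat = k := by omega
      have e4 : (a + (n : ℤ) - a).toNat = n := by omega
      simp only [e1, e2, e3, e4]
      exact CMF2_hcomp τ α equi peif h v X hcompat n k m a c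
    · intro a b c d' d hab h1 h2
      obtain ⟨n, rfl⟩ : ∃ n : ℕ, b = a + n := ⟨(b - a).toNat, by omega⟩
      obtain ⟨m, rfl⟩ : ∃ m : ℕ, d' = c + m := ⟨(d' - c).toNat, by omega⟩
      obtain ⟨k, rfl⟩ : ∃ k : ℕ, d = c + m + k := ⟨(d - (c + m)).toNat, by omega⟩
      have e1 : (a + (n : ℤ) - a).toNat = n := by omega
      have e2 : (c + (m : ℤ) + (k : ℤ) - c).toNat = m + k := by omega
      have e3 : (c + (m : ℤ) - c).toNat = m := by omega
      have e4 : (c + (m : ℤ) + (k : ℤ) - (c + m)).toNat = k := by omega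
      simp only [e1, e2, e3, e4]
      exact CMF2_vcomp α h v X n m k a c
  exact ⟨_, hprop, fun F' h' => CMRect_unique τ α h v X F' _ h' hprop⟩
end
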